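/- Fix k < j ≤ q. For any real γ, the scaled score difference (1/N)(GAIC^γ_j(N) − GAIC^γ_k(N)) converges as N → ∞ to (γ − 2)(j − k). In particular, for γ = 2 the scaled difference between the AIC scores of any two models of index at least k converges to 0. -/

import Mathlib

open Filter

/-- For `σ > 0`, `ψ_σ(x) = x + σ²/x`. -/
noncomputable def psi (σ x : ℝ) : ℝ := x + σ ^ 2 / x

/-- The score `GAIC^γ_j(N) = (N/(2σ²)) Σ_{i=j+1}^{q} ℓ_i(N)² + γ(Nj − j(j−1)/2)`. -/
noncomputable def GAIC (σ : ℝ) (q : ℕ) (ℓ : ℕ → ℕ → ℝ) (γ : ℝ) (j N : ℕ) : ℝ :=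
  ((N : ℝ) / (2 * σ ^ 2)) * ∑ i ∈ Finset.Icc (j + 1) q, (ℓ i N) ^ 2
    + γ * ((N : ℝ) * (j : ℝ) - (j : ℝ) * ((j : ℝ) - 1) / 2)

/-- For fixed `k < j ≤ q` and any real `γ`, the scaled score difference
`(1/N)(GAIC^γ_j(N) − GAIC^γ_k(N))` converges to `(γ − 2)(j − k)`. In particular, for
`γ = 2` the scaled difference between the AIC scores of any two models of index at least
`k` converges to `0`. -/
lemma gaic_aux (σ : ℝ) (hσ : 0 < σ) (q k : ℕ) (ℓ : ℕ → ℕ → ℝ)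
    (hbulk : ∀ i : ℕ, k < i → i ≤ q →
      Tendsto (fun N : ℕ => ℓ i N) atTop (nhds (2 * σ)))
    (a b : ℕ) (hkb : k ≤ b) (hba : b ≤ a) (haq : a ≤ q) (γ : ℝ) :
    Tendsto (fun N : ℕ => (1 / (N : ℝ)) * (GAIC σ q ℓ γ a N - GAIC σ q ℓ γ b N)) atTop
      (nhds ((γ - 2) * ((a : ℝ) - (b : ℝ)))) := by
  have hsplit : ∀ N, (∑ i ∈ Finset.Ioc b a, (ℓ i N) ^ 2)
      + ∑ i ∈ Finset.Icc (a + 1) q, (ℓ i N) ^ 2 = ∑ i ∈ Finset.Icc (b + 1) q, (ℓ i N) ^ 2 := by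
    intro N
    rw [Finset.Icc_add_one_left_eq_Ioc, Finset.Icc_add_one_left_eq_Ioc]
    exact Finset.sum_Ioc_consecutive (fun i => (ℓ i N) ^ 2) hba haq
  have hsum : Tendsto (fun N : ℕ => ∑ i ∈ Finset.Ioc b a, (ℓ i N) ^ 2) atTop
      (nhds (((a : ℝ) - b) * (2 * σ) ^ 2)) := by
    have h1 : Tendsto (fun N : ℕ => ∑ i ∈ Finset.Ioc b a, (ℓ i N) ^ 2) atTop
        (nhds (∑ _i ∈ Finset.Ioc b a, (2 * σ) ^ 2)) := by
      apply tendsto_finset_sum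
      intro i hi
      rw [Finset.mem_Ioc] at hi
      exact ((hbulk i (lt_of_le_of_lt hkb hi.1) (hi.2.trans haq)).pow 2)
    convert h1 using 2
    rw [Finset.sum_const, Nat.card_Ioc, nsmul_eq_mul, Nat.cast_sub hba]
  have hσ2 : (2 * σ ^ 2) ≠ 0 := by positivity
  have hmain : Tendsto (fun N : ℕ =>
      (-(1 / (2 * σ ^ 2))) * (∑ i ∈ Finset.Ioc b a, (ℓ i N) ^ 2)
      + γ * ((a : ℝ) - b)
      + (-(γ * (((a : ℝ) * ((a : ℝ) - 1) - (b : ℝ) * ((b : ℝ) - 1)) / 2))) * (1 / (N : ℝ)))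
      atTop (nhds ((γ - 2) * ((a : ℝ) - (b : ℝ)))) := by
    have h0 : Tendsto (fun N : ℕ => (1 / (N : ℝ))) atTop (nhds 0) :=
      tendsto_one_div_atTop_nhds_zero_nat
    have := ((hsum.const_mul (-(1 / (2 * σ ^ 2)))).add (tendsto_const_nhds : Tendsto (fun _ : ℕ => γ * ((a:ℝ) - b)) atTop (nhds (γ * ((a:ℝ) - b))))).add
      (h0.const_mul (-(γ * (((a : ℝ) * ((a : ℝ) - 1) - (b : ℝ) * ((b : ℝ) - 1)) / 2))))
    convert this using 1
    field_simp
    ring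
  refine hmain.congr' ?_
  filter_upwards [eventually_ge_atTop 1] with N hN
  have hN0 : (N : ℝ) ≠ 0 := Nat.cast_ne_zero.mpr (by omega)
  have hs := hsplit N
  unfold GAIC
  rw [← hs]
  field_simp
  ring

theorem gaic_diff_tendsto_above
    (σ : ℝ) (hσ : 0 < σ) (q k : ℕ) (hq : 1 ≤ q) (hkq : k ≤ q)
    (lam : ℕ → ℝ)
    (hlam_anti : ∀ i j : ℕ, 1 ≤ i → i ≤ j → j ≤ k → lam j ≤ lam i)
    (hlam_gt : ∀ i : ℕ, 1 ≤ i → i ≤ k → σ < lam i)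
    (ℓ : ℕ → ℕ → ℝ)
    (hℓ_anti : ∀ N i j : ℕ, 1 ≤ i → i ≤ j → j ≤ q → ℓ j N ≤ ℓ i N)
    (hspike : ∀ i : ℕ, 1 ≤ i → i ≤ k →
      Tendsto (fun N : ℕ => ℓ i N) atTop (nhds (psi σ (lam i))))
    (hbulk : ∀ i : ℕ, k < i → i ≤ q →
      Tendsto (fun N : ℕ => ℓ i N) atTop (nhds (2 * σ)))
    (j : ℕ) (hkj : k < j) (hjq : j ≤ q) (γ : ℝ) :
    Tendsto (fun N : ℕ => (1 / (N : ℝ)) * (GAIC σ q ℓ γ j N - GAIC σ q ℓ γ k N)) atTop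
      (nhds ((γ - 2) * ((j : ℝ) - (k : ℝ)))) ∧
    ∀ j₁ j₂ : ℕ, k ≤ j₁ → j₁ ≤ q → k ≤ j₂ → j₂ ≤ q →
      Tendsto (fun N : ℕ => (1 / (N : ℝ)) * (GAIC σ q ℓ 2 j₁ N - GAIC σ q ℓ 2 j₂ N)) atTop
        (nhds 0) := by
  constructor
  · exact gaic_aux σ hσ q k ℓ hbulk j k le_rfl hkj.le hjq γ
  · intro j₁ j₂ h1 h1q h2 h2q
    rcases le_total j₂ j₁ with h | h
    · have := gaic_aux σ hσ q k ℓ hbulk j₁ j₂ h2 h h1q 2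
      simpa using this
    · have := gaic_aux σ hσ q k ℓ hbulk j₂ j₁ h1 h h2q 2
      have hneg := this.neg
      have : -((2:ℝ) - 2) * ((j₂:ℝ) - j₁) = 0 := by ring
      rw [neg_mul] at this
      rw [← this] at *
      refine (hneg.congr (fun N => ?_))
      ring
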